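/- There is a ℤ-module isomorphism h : ℤ^d[C] → ℤ[x]/Pℤ[x] satisfying h(C^i e₁) = X^i for every i ∈ ℕ, where e₁ = (1, 0, …, 0)ᵀ ∈ ℚ^d and X = x + Pℤ[x]; in particular, ℤ^d[C] ≅ ℤ[x]/Pℤ[x] as ℤ-modules. -/

import Mathlib

open Matrix Polynomial

noncomputable section

/-- `ℤᵈ[C]` as a `ℤ`-submodule of `ℚᵈ`: the span of all `Cⁱ v` with
`v` an integer vector; the smallest `C`-invariant `ℤ`-module containing `ℤᵈ`. -/
def intSpanSub {n : ℕ} (A : Matrix (Fin n) (Fin n) ℚ) : Submodule ℤ (Fin n → ℚ) :=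
  Submodule.span ℤ
    {x | ∃ (i : ℕ) (v : Fin n → ℤ), x = (A ^ i).mulVec (fun j => ((v j : ℚ)))}

/-- The companion matrix of a monic polynomial of degree `n`. -/
def companionMat (n : ℕ) (q : Polynomial ℚ) : Matrix (Fin n) (Fin n) ℚ :=
  Matrix.of fun i j =>
    (if (i : ℕ) = (j : ℕ) + 1 then 1 else 0) +
    (if (j : ℕ) = n - 1 then -(q.coeff i) else 0)

-- sum_mulVec
lemma my_sum_mulVec {β m n α : Type*} [Fintype n] [NonUnitalNonAssocSemiring α]
    (s : Finset β) (A : β → Matrix m n α) (v : n → α) :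
    (∑ i ∈ s, A i).mulVec v = ∑ i ∈ s, (A i).mulVec v := by
  induction s using Finset.cons_induction <;> simp [Matrix.add_mulVec, *]

-- powers of companion matrix on e₁
lemma my_pow_e₁ {d : ℕ} {q : Polynomial ℚ} {Cm : Matrix (Fin d) (Fin d) ℚ}
    (hCm : Cm = companionMat d q) {e₁ : Fin d → ℚ}
    (he₁ : e₁ = fun j : Fin d => if (j : ℕ) = 0 then 1 else 0) :
    ∀ i, i < d → (Cm ^ i).mulVec e₁ = fun k : Fin d => if (k : ℕ) = i then (1:ℚ) else 0 := by
  intro i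
  induction i with
  | zero => intro h; simp [he₁]
  | succ i ih =>
    intro h
    have hi : i < d := Nat.lt_of_succ_lt h
    have hsingle : (fun k : Fin d => if (k : ℕ) = i then (1:ℚ) else 0)
        = Pi.single (⟨i, hi⟩ : Fin d) 1 := by
      funext k
      rcases eq_or_ne (k : ℕ) i with hk | hk
      · rw [if_pos hk, Pi.single_apply, if_pos (Fin.ext hk)]
      · rw [if_neg hk, Pi.single_apply, if_neg (fun hh => hk (by simpa using congrArg Fin.val hh))]
    rw [pow_succ', ← Matrix.mulVec_mulVec, ih hi, hsingle, Matrix.mulVec_single_one]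
    funext k
    have hne : i ≠ d - 1 := by omega
    simp only [hCm, companionMat, Matrix.col_apply, Matrix.of_apply, mul_one]
    rw [if_neg hne, add_zero]

lemma my_last {d : ℕ} (hd : 1 ≤ d) {q : Polynomial ℚ} {Cm : Matrix (Fin d) (Fin d) ℚ}
    (hCm : Cm = companionMat d q) :
    Cm.mulVec (fun k : Fin d => if (k : ℕ) = d - 1 then (1:ℚ) else 0)
      = fun k : Fin d => -(q.coeff k) := by
  have hlt : d - 1 < d := by omega
  have hsingle : (fun k : Fin d => if (k : ℕ) = d - 1 then (1:ℚ) else 0)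
      = Pi.single (⟨d - 1, hlt⟩ : Fin d) 1 := by
    funext k
    rcases eq_or_ne (k : ℕ) (d - 1) with hk | hk
    · rw [if_pos hk, Pi.single_apply, if_pos (Fin.ext hk)]
    · rw [if_neg hk, Pi.single_apply, if_neg (fun hh => hk (by simpa using congrArg Fin.val hh))]
  rw [hsingle, Matrix.mulVec_single]
  funext k
  have hk : (k : ℕ) ≠ (d - 1) + 1 := by have := k.isLt; omega
  simp only [hCm, companionMat, Matrix.of_apply, mul_one]
  simp [hk]

lemma my_lowdeg {d : ℕ} {q : Polynomial ℚ} {Cm : Matrix (Fin d) (Fin d) ℚ}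
    (hCm : Cm = companionMat d q) {e₁ : Fin d → ℚ}
    (he₁ : e₁ = fun j : Fin d => if (j : ℕ) = 0 then 1 else 0)
    (r : Polynomial ℚ) (hr : r.natDegree < d) :
    (Polynomial.aeval Cm r).mulVec e₁ = fun k : Fin d => r.coeff (k : ℕ) := by
  rw [Polynomial.aeval_eq_sum_range' hr, my_sum_mulVec]
  funext k
  rw [Finset.sum_apply]
  have hterm : ∀ j ∈ Finset.range d,
      ((r.coeff j • Cm ^ j).mulVec e₁) k
        = if (k : ℕ) = j then r.coeff j else 0 := by
    intro j hj
    rw [Matrix.smul_mulVec, my_pow_e₁ hCm he₁ j (Finset.mem_range.mp hj)]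
    simp [mul_ite]
  rw [Finset.sum_congr rfl hterm]
  rcases lt_or_ge (k : ℕ) d with h | h
  · rw [Finset.sum_ite_eq (Finset.range d) (k : ℕ) (fun j => r.coeff j),
      if_pos (Finset.mem_range.mpr h)]
  · exact absurd k.isLt (by omega)

lemma my_qC {d : ℕ} (hd : 1 ≤ d) {q : Polynomial ℚ} (hq : q.Monic) (hqd : q.natDegree = d)
    {Cm : Matrix (Fin d) (Fin d) ℚ} (hCm : Cm = companionMat d q) {e₁ : Fin d → ℚ}
    (he₁ : e₁ = fun j : Fin d => if (j : ℕ) = 0 then 1 else 0) :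
    (Polynomial.aeval Cm q).mulVec e₁ = 0 := by
  have hqd' : q.natDegree < d + 1 := by omega
  rw [Polynomial.aeval_eq_sum_range' hqd', my_sum_mulVec, Finset.sum_range_succ]
  have hlast : ((q.coeff d • Cm ^ d).mulVec e₁) = fun k : Fin d => -(q.coeff k) := by
    have hcd : q.coeff d = 1 := by
      rw [← hqd]; exact hq.coeff_natDegree
    have hpow : (Cm ^ d).mulVec e₁ = fun k : Fin d => -(q.coeff k) := by
      have hpowd : Cm ^ d = Cm * Cm ^ (d - 1) := by
        rw [← pow_succ', Nat.sub_add_cancel hd]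
      rw [hpowd, ← Matrix.mulVec_mulVec,
        my_pow_e₁ hCm he₁ (d-1) (by omega), my_last hd hCm]
    rw [hcd, one_smul, hpow]
  rw [hlast]
  funext k
  rw [Pi.add_apply, Finset.sum_apply]
  have hterm : ∀ j ∈ Finset.range d,
      ((q.coeff j • Cm ^ j).mulVec e₁) k
        = if (k : ℕ) = j then q.coeff j else 0 := by
    intro j hj
    rw [Matrix.smul_mulVec, my_pow_e₁ hCm he₁ j (Finset.mem_range.mp hj)]
    simp [mul_ite]
  rw [Finset.sum_congr rfl hterm,
    Finset.sum_ite_eq (Finset.range d) (k : ℕ) (fun j => q.coeff j),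
    if_pos (Finset.mem_range.mpr k.isLt)]
  simp

lemma my_ker_iff {d : ℕ} (hd : 1 ≤ d) {q : Polynomial ℚ} (hq : q.Monic) (hqd : q.natDegree = d)
    {Cm : Matrix (Fin d) (Fin d) ℚ} (hCm : Cm = companionMat d q) {e₁ : Fin d → ℚ}
    (he₁ : e₁ = fun j : Fin d => if (j : ℕ) = 0 then 1 else 0)
    (f : Polynomial ℚ) :
    (Polynomial.aeval Cm f).mulVec e₁ = 0 ↔ q ∣ f := by
  have key : ∀ g : Polynomial ℚ, (Polynomial.aeval Cm (q * g)).mulVec e₁ = 0 := by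
    intro g
    rw [show q * g = g * q from mul_comm _ _, _root_.map_mul, ← Matrix.mulVec_mulVec,
      my_qC hd hq hqd hCm he₁, Matrix.mulVec_zero]
  constructor
  · intro h
    rw [← modByMonic_eq_zero_iff_dvd hq]
    have hdecomp : f %ₘ q + q * (f /ₘ q) = f := modByMonic_add_div f q
    have h2 : (Polynomial.aeval Cm (f %ₘ q)).mulVec e₁ = 0 := by
      have := congrArg (fun p => (Polynomial.aeval Cm p).mulVec e₁) hdecomp
      simp only [map_add, Matrix.add_mulVec, key, add_zero] at this
      rw [this, h]
    by_contra hne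
    have hrd : (f %ₘ q).natDegree < d := by
      have := Polynomial.degree_modByMonic_lt f hq
      rw [← hqd]
      exact Polynomial.natDegree_lt_natDegree hne this
    rw [my_lowdeg hCm he₁ _ hrd] at h2
    apply hne
    ext n
    rcases lt_or_ge n d with hn | hn
    · simpa using congrFun h2 ⟨n, hn⟩
    · rw [Polynomial.coeff_eq_zero_of_natDegree_lt (by omega), Polynomial.coeff_zero]
  · rintro ⟨g, rfl⟩
    exact key g

lemma my_gauss {P : Polynomial ℤ} (hprim : P.IsPrimitive) {c : ℤ} {q : Polynomial ℚ}
    (hc : (c : ℚ) ≠ 0)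
    (hPq : P.map (Int.castRingHom ℚ) = Polynomial.C (c : ℚ) * q)
    (f : Polynomial ℤ) :
    q ∣ f.map (Int.castRingHom ℚ) ↔ P ∣ f := by
  have hCc : (Polynomial.C (c : ℚ)) * (Polynomial.C (c : ℚ)⁻¹) = 1 := by
    rw [← Polynomial.C_mul, mul_inv_cancel₀ hc, Polynomial.C_1]
  constructor
  · rintro ⟨s, hs⟩
    have hPf : P.map (Int.castRingHom ℚ) ∣ f.map (Int.castRingHom ℚ) := by
      refine ⟨Polynomial.C (c : ℚ)⁻¹ * s, ?_⟩
      rw [hPq, hs, show Polynomial.C (c:ℚ) * q * (Polynomial.C (c:ℚ)⁻¹ * s)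
        = (Polynomial.C (c:ℚ) * Polynomial.C (c:ℚ)⁻¹) * (q * s) from by ring, hCc, one_mul]
    rcases eq_or_ne f 0 with rfl | hf0
    · exact dvd_zero P
    have hcont : (f.content : ℚ) ≠ 0 := by
      exact_mod_cast fun h => hf0 (Polynomial.content_eq_zero_iff.mp (by exact_mod_cast h))
    have hfpp : f.map (Int.castRingHom ℚ)
        = Polynomial.C (f.content : ℚ) * (f.primPart.map (Int.castRingHom ℚ)) := by
      conv_lhs => rw [f.eq_C_content_mul_primPart]
      rw [Polynomial.map_mul, Polynomial.map_C]
      rfl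
    have hPpp : P.map (Int.castRingHom ℚ) ∣ f.primPart.map (Int.castRingHom ℚ) := by
      have h2 : P.map (Int.castRingHom ℚ) ∣
          Polynomial.C (f.content : ℚ)⁻¹ * (f.map (Int.castRingHom ℚ)) := hPf.mul_left _
      have h3 : Polynomial.C (f.content : ℚ)⁻¹ * (f.map (Int.castRingHom ℚ))
          = f.primPart.map (Int.castRingHom ℚ) := by
        rw [hfpp, ← mul_assoc, ← Polynomial.C_mul, inv_mul_cancel₀ hcont,
          Polynomial.C_1, one_mul]
      rwa [h3] at h2
    have : P ∣ f.primPart :=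
      hprim.dvd_of_fraction_map_dvd_fraction_map (K := ℚ) hPpp
    exact this.trans f.primPart_dvd
  · intro h
    have : P.map (Int.castRingHom ℚ) ∣ f.map (Int.castRingHom ℚ) :=
      Polynomial.map_dvd _ h
    refine dvd_trans ?_ this
    rw [hPq]
    exact Dvd.intro_left _ rfl

def phiMap (d : ℕ) (Cm : Matrix (Fin d) (Fin d) ℚ) (e₁ : Fin d → ℚ) :
    Polynomial ℤ →ₗ[ℤ] (Fin d → ℚ) where
  toFun f := (Polynomial.aeval Cm f).mulVec e₁
  map_add' f g := by simp [Matrix.add_mulVec]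
  map_smul' z f := by
    simp only [_root_.map_smul, RingHom.id_apply]
    rw [← Int.cast_smul_eq_zsmul ℚ z ((Polynomial.aeval Cm f)),
      ← Int.cast_smul_eq_zsmul ℚ z ((Polynomial.aeval Cm f).mulVec e₁),
      Matrix.smul_mulVec]

lemma phiMap_Xpow (d : ℕ) (Cm : Matrix (Fin d) (Fin d) ℚ) (e₁ : Fin d → ℚ) (i : ℕ) :
    phiMap d Cm e₁ ((X : Polynomial ℤ) ^ i) = (Cm ^ i).mulVec e₁ := by
  simp [phiMap]

lemma my_range {d : ℕ} {q : Polynomial ℚ} {Cm : Matrix (Fin d) (Fin d) ℚ}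
    (hCm : Cm = companionMat d q) {e₁ : Fin d → ℚ}
    (he₁ : e₁ = fun j : Fin d => if (j : ℕ) = 0 then 1 else 0) :
    LinearMap.range (phiMap d Cm e₁) = intSpanSub Cm := by
  apply le_antisymm
  · rintro x ⟨f, rfl⟩
    induction f using Polynomial.induction_on' with
    | add p r hp hr => rw [map_add]; exact Submodule.add_mem _ hp hr
    | monomial n a =>
      apply Submodule.subset_span
      refine ⟨n, fun j : Fin d => if (j : ℕ) = 0 then a else 0, ?_⟩
      rw [← Polynomial.smul_X_eq_monomial, _root_.map_smul, phiMap_Xpow,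
        ← Int.cast_smul_eq_zsmul ℚ a ((Cm ^ n).mulVec e₁), ← Matrix.mulVec_smul]
      have hv : ((a : ℚ) • e₁) = fun j : Fin d => ((if (j : ℕ) = 0 then a else 0 : ℤ) : ℚ) := by
        funext j
        rcases eq_or_ne (j : ℕ) 0 with hj | hj <;> simp [he₁, hj]
      rw [hv]
  · rw [intSpanSub, Submodule.span_le]
    rintro x ⟨i, v, rfl⟩
    refine ⟨∑ j : Fin d, (v j) • (X : Polynomial ℤ) ^ (i + (j : ℕ)), ?_⟩
    rw [map_sum]
    have hterm : ∀ j : Fin d,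
        phiMap d Cm e₁ ((v j) • (X : Polynomial ℤ) ^ (i + (j : ℕ)))
          = (Cm ^ i).mulVecLin ((v j : ℚ) • fun k : Fin d => if (k : ℕ) = (j : ℕ) then (1:ℚ) else 0) := by
      intro j
      rw [_root_.map_smul, phiMap_Xpow, pow_add, ← Matrix.mulVec_mulVec,
        my_pow_e₁ hCm he₁ (j : ℕ) j.isLt,
        ← Int.cast_smul_eq_zsmul ℚ (v j), Matrix.mulVecLin_apply, Matrix.mulVec_smul]
    rw [Finset.sum_congr rfl (fun j _ => hterm j), ← map_sum]
    rw [Matrix.mulVecLin_apply]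
    have hvec : (∑ x : Fin d, ((v x : ℚ)) • fun k : Fin d => if (k : ℕ) = (x : ℕ) then (1:ℚ) else 0)
        = fun j : Fin d => (v j : ℚ) := by
      funext k
      rw [Finset.sum_apply, Finset.sum_eq_single k]
      · simp
      · intro j _ hj
        have : (k : ℕ) ≠ (j : ℕ) := fun hh => hj (Fin.ext hh).symm
        simp [this]
      · intro hk; exact absurd (Finset.mem_univ k) hk
    rw [hvec]

/-- there is a `ℤ`-module isomorphism
`h : ℤᵈ[C] ≃ ℤ[x]/Pℤ[x]` with `h(Cⁱe₁) = Xⁱ` for all `i ∈ ℕ`. -/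
theorem stmt12 (d : ℕ) (hd : 1 ≤ d) (P : Polynomial ℤ)
    (hdeg : P.natDegree = d) (hprim : P.IsPrimitive)
    (hlead : P.coeff d ≠ 0) (h0 : P.coeff 0 ≠ 0)
    (c : ℤ) (q : Polynomial ℚ) (hq : q.Monic)
    (hPq : P.map (Int.castRingHom ℚ) = Polynomial.C (c : ℚ) * q)
    (Cm : Matrix (Fin d) (Fin d) ℚ) (hCm : Cm = companionMat d q)
    (e₁ : Fin d → ℚ) (he₁ : e₁ = fun j : Fin d => if (j : ℕ) = 0 then 1 else 0) :
    (∀ i : ℕ, (Cm ^ i).mulVec e₁ ∈ intSpanSub Cm) ∧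
    ∃ h : intSpanSub Cm ≃ₗ[ℤ] Polynomial ℤ ⧸ Ideal.span {P},
      ∀ (x : intSpanSub Cm) (i : ℕ),
        (x : Fin d → ℚ) = (Cm ^ i).mulVec e₁ →
        h x = (Ideal.Quotient.mk (Ideal.span {P}) X) ^ i := by
  have hinj : Function.Injective (Int.castRingHom ℚ) := fun a b h => Int.cast_injective h
  have hc : (c : ℚ) ≠ 0 := by
    intro hcc
    rw [hcc, Polynomial.C_0, zero_mul] at hPq
    have hP0 : P = 0 := (Polynomial.map_eq_zero_iff hinj).mp hPq
    rw [hP0] at h0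
    simp at h0
  have hqd : q.natDegree = d := by
    have h1 : (P.map (Int.castRingHom ℚ)).natDegree = d := by
      rw [Polynomial.natDegree_map_eq_of_injective hinj, hdeg]
    rw [hPq, Polynomial.natDegree_C_mul hc] at h1
    exact h1
  have mem1 : ∀ i : ℕ, (Cm ^ i).mulVec e₁ ∈ intSpanSub Cm := by
    intro i
    apply Submodule.subset_span
    refine ⟨i, fun j : Fin d => if (j : ℕ) = 0 then 1 else 0, ?_⟩
    congr 1
    funext j
    rcases eq_or_ne (j : ℕ) 0 with hj | hj <;> simp [he₁, hj]
  refine ⟨mem1, ?_⟩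
  have hker : LinearMap.ker (phiMap d Cm e₁) = (Ideal.span {P}).restrictScalars ℤ := by
    ext f
    simp only [LinearMap.mem_ker, Submodule.restrictScalars_mem, Ideal.mem_span_singleton]
    have hmap : phiMap d Cm e₁ f
        = (Polynomial.aeval Cm (f.map (Int.castRingHom ℚ))).mulVec e₁ := by
      simp only [phiMap, LinearMap.coe_mk, AddHom.coe_mk]
      rw [show Int.castRingHom ℚ = algebraMap ℤ ℚ from rfl, Polynomial.aeval_map_algebraMap]
    rw [hmap, my_ker_iff hd hq hqd hCm he₁, my_gauss hprim hc hPq]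
  have hrange := my_range (q := q) hCm he₁
  let E0 : (Polynomial ℤ ⧸ LinearMap.ker (phiMap d Cm e₁)) ≃ₗ[ℤ]
      LinearMap.range (phiMap d Cm e₁) := (phiMap d Cm e₁).quotKerEquivRange
  let Eq0 : LinearMap.range (phiMap d Cm e₁) ≃ₗ[ℤ] intSpanSub Cm :=
    LinearEquiv.ofEq _ _ hrange
  let Eq1 : (Polynomial ℤ ⧸ LinearMap.ker (phiMap d Cm e₁)) ≃ₗ[ℤ]
      (Polynomial ℤ ⧸ (Ideal.span {P}).restrictScalars ℤ) :=
    Submodule.quotEquivOfEq _ _ hker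
  let Eq2 := Submodule.Quotient.restrictScalarsEquiv ℤ (Ideal.span {P})
  refine ⟨Eq0.symm.trans (E0.symm.trans (Eq1.trans Eq2)), ?_⟩
  intro x i hx
  have hx2 : x = Eq0 (E0 (Submodule.Quotient.mk ((X : Polynomial ℤ) ^ i))) := by
    apply Subtype.ext
    have hcoe : ((Eq0 (E0 (Submodule.Quotient.mk ((X : Polynomial ℤ) ^ i)))) : Fin d → ℚ)
        = phiMap d Cm e₁ ((X : Polynomial ℤ) ^ i) := by
      rw [show ((Eq0 (E0 (Submodule.Quotient.mk ((X : Polynomial ℤ) ^ i)))) : Fin d → ℚ)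
          = ((E0 (Submodule.Quotient.mk ((X : Polynomial ℤ) ^ i))) : Fin d → ℚ) from
        LinearEquiv.coe_ofEq_apply _ _]
      exact LinearMap.quotKerEquivRange_apply_mk _ _
    rw [hcoe, phiMap_Xpow, hx]
  rw [hx2]
  simp only [LinearEquiv.trans_apply, LinearEquiv.symm_apply_apply]
  rw [show Eq1 (Submodule.Quotient.mk ((X : Polynomial ℤ) ^ i))
      = Submodule.Quotient.mk ((X : Polynomial ℤ) ^ i) from rfl]
  rw [Submodule.Quotient.restrictScalarsEquiv_mk]
  rw [show (Submodule.Quotient.mk ((X : Polynomial ℤ) ^ i) : Polynomial ℤ ⧸ Ideal.span {P})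
      = Ideal.Quotient.mk (Ideal.span {P}) ((X : Polynomial ℤ) ^ i) from rfl, map_pow]
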